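/- Let T be an essentially small triangulated category in which every object is a finite direct sum of indecomposables. Then T is a block (not triangle equivalent to a nontrivial product of triangulated categories) if and only if T is path-connected, i.e., any two indecomposable objects are connected by a walk, where a path step from X_i to X_{i+1} is either a nonzero morphism X_i → X_{i+1} or the relation X_{i+1} = X_i[1], and a walk is a sequence of forward or backward path steps. -/

import Mathlib

/-!
STATEMENT 10: Let `T` be an essentially small triangulated category in which every object
is a finite direct sum of indecomposables.  Then `T` is a block (admits no non-trivial
product decomposition into triangulated subcategories) if and only if `T` is
path-connected: any two indecomposable objects are connected by a walk.
-/
open CategoryTheory Category Limits Pretriangulated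

section PathsAndBlocks

variable {C : Type*} [Category C] [Preadditive C] [HasZeroObject C] [HasShift C ℤ]
  [∀ n : ℤ, (shiftFunctor C n).Additive] [Pretriangulated C]
  [HasBinaryBiproducts C] [HasFiniteBiproducts C]

/-- An object is indecomposable if it is non-zero and has no non-trivial
direct sum decomposition. -/
def IsIndec (X : C) : Prop :=
  ¬ IsZero X ∧ ∀ Y Z : C, (X ≅ Y ⊞ Z) → IsZero Y ∨ IsZero Z

/-- A single step of a path: both objects are indecomposable and either there is a
non-zero morphism `X ⟶ Y` or `Y = X⟦1⟧`. -/
def PathStep (X Y : C) : Prop :=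
  IsIndec X ∧ IsIndec Y ∧ ((∃ f : X ⟶ Y, f ≠ 0) ∨ Nonempty (Y ≅ X⟦(1 : ℤ)⟧))

/-- There is a path `X ⇝ Y`: a finite sequence of path steps. -/
def HasPath : C → C → Prop := Relation.ReflTransGen PathStep

/-- There is a walk from `X` to `Y`: a finite sequence of forward or backward path steps. -/
def HasWalk : C → C → Prop := Relation.ReflTransGen (fun X Y => PathStep X Y ∨ PathStep Y X)

/-- Every object is a finite direct sum of indecomposable objects. -/
def AllObjectsDecompose : Prop :=
  ∀ X : C, ∃ (n : ℕ) (G : Fin n → C), (∀ i, IsIndec (G i)) ∧ Nonempty (X ≅ ⨁ G)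

variable (C) in
/-- A non-trivial decomposition of the triangulated category `C` into a product of two
triangulated subcategories: two iso-closed, shift-closed classes of objects, each
containing a non-zero object, with no non-zero morphisms between them in either
direction, such that every object is a direct sum of an object of each. -/
def IsProductDecomp (P Q : C → Prop) : Prop :=
  (∀ {X Y : C}, (X ≅ Y) → P X → P Y) ∧ (∀ {X Y : C}, (X ≅ Y) → Q X → Q Y) ∧
  (∃ X, P X ∧ ¬ IsZero X) ∧ (∃ X, Q X ∧ ¬ IsZero X) ∧
  (∀ (X Y : C), P X → Q Y → ∀ f : X ⟶ Y, f = 0) ∧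
  (∀ (X Y : C), Q X → P Y → ∀ f : X ⟶ Y, f = 0) ∧
  (∀ (X : C) (n : ℤ), P X → P (X⟦n⟧)) ∧ (∀ (X : C) (n : ℤ), Q X → Q (X⟦n⟧)) ∧
  (∀ X : C, ∃ X' X'' : C, P X' ∧ Q X'' ∧ Nonempty (X ≅ X' ⊞ X''))

variable (C) in
/-- `C` is a block: it admits no non-trivial product decomposition. -/
def IsBlock : Prop := ¬ ∃ P Q : C → Prop, IsProductDecomp C P Q

end PathsAndBlocks

section MyAux
variable {C : Type*} [Category C] [Preadditive C] [HasZeroObject C] [HasShift C ℤ]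
  [∀ n : ℤ, (shiftFunctor C n).Additive] [Pretriangulated C]
  [HasBinaryBiproducts C] [HasFiniteBiproducts C]

set_option linter.unusedSectionVars false

lemma myIsZero_shift_iff (X : C) (n : ℤ) : IsZero ((shiftFunctor C n).obj X) ↔ IsZero X := by
  rw [IsZero.iff_id_eq_zero, IsZero.iff_id_eq_zero]
  constructor
  · intro h
    apply (shiftFunctor C n).map_injective
    simp only [CategoryTheory.Functor.map_id, Functor.map_zero, h]
  · intro h
    rw [show 𝟙 ((shiftFunctor C n).obj X) = (shiftFunctor C n).map (𝟙 X) by simp, h,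
      Functor.map_zero]

noncomputable def mySingleIso (X : C) : (⨁ fun _ : PUnit => X) ≅ X where
  hom := biproduct.π _ PUnit.unit
  inv := biproduct.lift fun _ => 𝟙 X
  hom_inv_id := by
    apply biproduct.hom_ext'
    rintro ⟨⟩
    apply biproduct.hom_ext
    rintro ⟨⟩
    simp [biproduct.ι_π]
  inv_hom_id := by simp

noncomputable def mySplitIso {n : ℕ} (G : Fin n → C) (p : Fin n → Prop) [DecidablePred p] :
    (⨁ G) ≅ (⨁ fun i : {i // p i} => G i.1) ⊞ (⨁ fun i : {i // ¬ p i} => G i.1) where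
  hom := biprod.lift (biproduct.lift fun j => biproduct.π G j.1)
    (biproduct.lift fun j => biproduct.π G j.1)
  inv := biprod.desc (biproduct.desc fun j => biproduct.ι G j.1)
    (biproduct.desc fun j => biproduct.ι G j.1)
  hom_inv_id := by
    rw [biprod.lift_desc, biproduct.lift_desc, biproduct.lift_desc, ← biproduct.total]
    exact Fintype.sum_subtype_add_sum_subtype p (fun j => biproduct.π G j ≫ biproduct.ι G j)
  inv_hom_id := by
    apply biprod.hom_ext'
    · apply biprod.hom_ext
      · apply biproduct.hom_ext'; intro j; apply biproduct.hom_ext; intro k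
        by_cases h : j = k
        · subst h; simp [biproduct.ι_π]
        · have h' : (j : Fin n) ≠ (k : Fin n) := fun hh => h (Subtype.ext hh)
          simp [biproduct.ι_π, h, h']
      · apply biproduct.hom_ext'; intro j; apply biproduct.hom_ext; intro k
        have h' : (j : Fin n) ≠ (k : Fin n) := fun hh => k.2 (hh ▸ j.2)
        simp [biproduct.ι_π, h']
    · apply biprod.hom_ext
      · apply biproduct.hom_ext'; intro j; apply biproduct.hom_ext; intro k
        have h' : (j : Fin n) ≠ (k : Fin n) := fun hh => j.2 (hh ▸ k.2)
        simp [biproduct.ι_π, h']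
      · apply biproduct.hom_ext'; intro j; apply biproduct.hom_ext; intro k
        by_cases h : j = k
        · subst h; simp [biproduct.ι_π]
        · have h' : (j : Fin n) ≠ (k : Fin n) := fun hh => h (Subtype.ext hh)
          simp [biproduct.ι_π, h, h']

noncomputable def myMapBiprod (F : C ⥤ C) [F.Additive] (Y Z : C) :
    F.obj (Y ⊞ Z) ≅ F.obj Y ⊞ F.obj Z where
  hom := biprod.lift (F.map biprod.fst) (F.map biprod.snd)
  inv := biprod.desc (F.map biprod.inl) (F.map biprod.inr)
  hom_inv_id := by
    rw [biprod.lift_desc, ← F.map_comp, ← F.map_comp, ← F.map_add, biprod.total, F.map_id]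
  inv_hom_id := by
    ext <;> simp [← Functor.map_comp]

noncomputable def myBiprodIsoLeft {A B : C} (hz : IsZero B) : A ⊞ B ≅ A where
  hom := biprod.fst
  inv := biprod.inl
  hom_inv_id := by
    apply biprod.hom_ext
    · simp
    · exact hz.eq_of_tgt _ _
  inv_hom_id := by simp

noncomputable def myBiprodIsoRight {A B : C} (hz : IsZero A) : A ⊞ B ≅ B where
  hom := biprod.snd
  inv := biprod.inr
  hom_inv_id := by
    apply biprod.hom_ext
    · exact hz.eq_of_tgt _ _
    · simp
  inv_hom_id := by simp

lemma myIndec_iso {X Y : C} (h : IsIndec X) (e : X ≅ Y) : IsIndec Y :=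
  ⟨fun hz => h.1 (hz.of_iso e), fun A B e' => h.2 A B (e.trans e')⟩

lemma myIndec_shift {X : C} (h : IsIndec X) (n : ℤ) : IsIndec (X⟦n⟧) := by
  refine ⟨fun hz => h.1 ((myIsZero_shift_iff X n).1 hz), fun Y Z e => ?_⟩
  have e2 : X ≅ Y⟦-n⟧ ⊞ Z⟦-n⟧ :=
    (shiftShiftNeg X n).symm ≪≫ (shiftFunctor C (-n)).mapIso e ≪≫
      myMapBiprod (shiftFunctor C (-n)) Y Z
  rcases h.2 _ _ e2 with hz | hz
  · exact Or.inl ((myIsZero_shift_iff Y (-n)).1 hz)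
  · exact Or.inr ((myIsZero_shift_iff Z (-n)).1 hz)

lemma myPathStep_of_iso {X Y : C} (hX : IsIndec X) (hY : IsIndec Y) (e : X ≅ Y) :
    PathStep X Y :=
  ⟨hX, hY, Or.inl ⟨e.hom, fun h => hX.1 (by
    rw [IsZero.iff_id_eq_zero, ← e.hom_inv_id, h, zero_comp])⟩⟩

lemma myWalk_symm {X Y : C} (h : HasWalk X Y) : HasWalk Y X :=
  haveI : Std.Symm (fun X Y : C => PathStep X Y ∨ PathStep Y X) := ⟨fun _ _ hh => Or.symm hh⟩
  (Relation.ReflTransGen.stdSymm (r := fun X Y : C => PathStep X Y ∨ PathStep Y X)).symm _ _ h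

lemma myWalk_shift {X : C} (h : IsIndec X) (n : ℤ) : HasWalk X (X⟦n⟧) := by
  induction n using Int.induction_on with
  | zero =>
    exact Relation.ReflTransGen.single (Or.inl (myPathStep_of_iso h (myIndec_shift h 0)
      ((shiftFunctorZero C ℤ).symm.app X)))
  | succ i ih =>
    exact ih.tail (Or.inl ⟨myIndec_shift h i, myIndec_shift h ((i:ℤ)+1),
      Or.inr ⟨(shiftFunctorAdd C (i:ℤ) 1).app X⟩⟩)
  | pred i ih =>
    refine ih.tail (Or.inr ⟨myIndec_shift h (-(i:ℤ)-1), myIndec_shift h (-(i:ℤ)),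
      Or.inr ⟨(shiftFunctorAdd' C (-(i:ℤ)-1) 1 (-(i:ℤ)) (by ring)).app X⟩⟩)

/-- The class of objects all of whose indecomposable summands are walk-connected to `X`. -/
def SideP (X : C) (Z : C) : Prop :=
  ∃ (ι : Type) (_ : Fintype ι) (G : ι → C),
    (∀ i, IsIndec (G i) ∧ HasWalk X (G i)) ∧ Nonempty (Z ≅ ⨁ G)

/-- The class of objects none of whose indecomposable summands are walk-connected to `X`. -/
def SideQ (X : C) (Z : C) : Prop :=
  ∃ (ι : Type) (_ : Fintype ι) (G : ι → C),
    (∀ i, IsIndec (G i) ∧ ¬ HasWalk X (G i)) ∧ Nonempty (Z ≅ ⨁ G)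

lemma mySideHomPQ (X : C) {Z W : C} (hZ : SideP X Z) (hW : SideQ X W) (f : Z ⟶ W) : f = 0 := by
  obtain ⟨ι, _, G, hG, ⟨e⟩⟩ := hZ
  obtain ⟨κ, _, H, hH, ⟨e'⟩⟩ := hW
  have key : e.inv ≫ f ≫ e'.hom = 0 := by
    apply biproduct.hom_ext'; intro j
    apply biproduct.hom_ext; intro k
    simp only [Category.assoc, zero_comp, comp_zero]
    by_contra hne
    exact (hH k).2 (((hG j).2).tail (Or.inl ⟨(hG j).1, (hH k).1,
      Or.inl ⟨biproduct.ι G j ≫ e.inv ≫ f ≫ e'.hom ≫ biproduct.π H k, hne⟩⟩))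
  calc f = e.hom ≫ (e.inv ≫ f ≫ e'.hom) ≫ e'.inv := by simp
  _ = 0 := by rw [key]; simp

lemma mySideHomQP (X : C) {Z W : C} (hZ : SideQ X Z) (hW : SideP X W) (f : Z ⟶ W) : f = 0 := by
  obtain ⟨ι, _, G, hG, ⟨e⟩⟩ := hZ
  obtain ⟨κ, _, H, hH, ⟨e'⟩⟩ := hW
  have key : e.inv ≫ f ≫ e'.hom = 0 := by
    apply biproduct.hom_ext'; intro j
    apply biproduct.hom_ext; intro k
    simp only [Category.assoc, zero_comp, comp_zero]
    by_contra hne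
    exact (hG j).2 (((hH k).2).tail (Or.inr ⟨(hG j).1, (hH k).1,
      Or.inl ⟨biproduct.ι G j ≫ e.inv ≫ f ≫ e'.hom ≫ biproduct.π H k, hne⟩⟩))
  calc f = e.hom ≫ (e.inv ≫ f ≫ e'.hom) ≫ e'.inv := by simp
  _ = 0 := by rw [key]; simp

lemma mySideP_shift (X : C) {Z : C} (h : SideP X Z) (n : ℤ) : SideP X (Z⟦n⟧) := by
  obtain ⟨ι, _, G, hG, ⟨e⟩⟩ := h
  refine ⟨ι, inferInstance, fun i => (G i)⟦n⟧, fun i =>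
    ⟨myIndec_shift (hG i).1 n, ((hG i).2).trans (myWalk_shift (hG i).1 n)⟩,
    ⟨(shiftFunctor C n).mapIso e ≪≫ (shiftFunctor C n).mapBiproduct G⟩⟩

lemma mySideQ_shift (X : C) {Z : C} (h : SideQ X Z) (n : ℤ) : SideQ X (Z⟦n⟧) := by
  obtain ⟨ι, _, G, hG, ⟨e⟩⟩ := h
  refine ⟨ι, inferInstance, fun i => (G i)⟦n⟧, fun i =>
    ⟨myIndec_shift (hG i).1 n, fun hw => (hG i).2
      (hw.trans (myWalk_symm (myWalk_shift (hG i).1 n)))⟩,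
    ⟨(shiftFunctor C n).mapIso e ≪≫ (shiftFunctor C n).mapBiproduct G⟩⟩

end MyAux

theorem block_iff_path_connected
    {C : Type*} [Category C] [Preadditive C] [HasZeroObject C] [HasShift C ℤ]
    [∀ n : ℤ, (shiftFunctor C n).Additive] [Pretriangulated C]
    [HasBinaryBiproducts C] [HasFiniteBiproducts C] [EssentiallySmall C]
    (hdec : AllObjectsDecompose (C := C)) :
    IsBlock C ↔ ∀ X Y : C, IsIndec X → IsIndec Y → HasWalk X Y := by
  constructor
  · -- block → path-connected
    intro hblock X Y hX hY
    by_contra hw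
    refine hblock ⟨SideP X, SideQ X, ?_, ?_, ?_, ?_, ?_, ?_, ?_, ?_, ?_⟩
    · rintro A B e ⟨ι, _, G, hG, ⟨e'⟩⟩
      exact ⟨ι, inferInstance, G, hG, ⟨e.symm ≪≫ e'⟩⟩
    · rintro A B e ⟨ι, _, G, hG, ⟨e'⟩⟩
      exact ⟨ι, inferInstance, G, hG, ⟨e.symm ≪≫ e'⟩⟩
    · exact ⟨X, ⟨PUnit, inferInstance, fun _ => X,
        fun _ => ⟨hX, Relation.ReflTransGen.refl⟩, ⟨(mySingleIso X).symm⟩⟩, hX.1⟩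
    · exact ⟨Y, ⟨PUnit, inferInstance, fun _ => Y,
        fun _ => ⟨hY, hw⟩, ⟨(mySingleIso Y).symm⟩⟩, hY.1⟩
    · exact fun A B hA hB f => mySideHomPQ X hA hB f
    · exact fun A B hA hB f => mySideHomQP X hA hB f
    · exact fun A n hA => mySideP_shift X hA n
    · exact fun A n hA => mySideQ_shift X hA n
    · intro Z
      obtain ⟨n, G, hind, ⟨e⟩⟩ := hdec Z
      letI : DecidablePred (fun i : Fin n => HasWalk X (G i)) := Classical.decPred _
      refine ⟨⨁ (fun i : {i // HasWalk X (G i)} => G i.1),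
        ⨁ (fun i : {i // ¬ HasWalk X (G i)} => G i.1), ?_, ?_,
        ⟨e ≪≫ mySplitIso G (fun i => HasWalk X (G i))⟩⟩
      · exact ⟨{i // HasWalk X (G i)}, inferInstance, fun i => G i.1,
          fun i => ⟨hind i.1, i.2⟩, ⟨Iso.refl _⟩⟩
      · exact ⟨{i // ¬ HasWalk X (G i)}, inferInstance, fun i => G i.1,
          fun i => ⟨hind i.1, i.2⟩, ⟨Iso.refl _⟩⟩
  · -- path-connected → block
    rintro hconn ⟨P, Q, hPiso, hQiso, ⟨X₀, hPX₀, hX₀⟩, ⟨Y₀, hQY₀, hY₀⟩,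
      hPQ, hQP, hPs, hQs, hdecPQ⟩
    -- every indecomposable lies in P or Q
    have indec_PorQ : ∀ Z : C, IsIndec Z → P Z ∨ Q Z := by
      intro Z hZ
      obtain ⟨Z', Z'', hPZ', hQZ'', ⟨e⟩⟩ := hdecPQ Z
      rcases hZ.2 _ _ e with hz | hz
      · exact Or.inr (hQiso (e ≪≫ myBiprodIsoRight hz).symm hQZ'')
      · exact Or.inl (hPiso (e ≪≫ myBiprodIsoLeft hz).symm hPZ')
    have not_both : ∀ Z : C, IsIndec Z → ¬ (P Z ∧ Q Z) := by
      rintro Z hZ ⟨hp, hq⟩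
      exact hZ.1 (by rw [IsZero.iff_id_eq_zero]; exact hPQ Z Z hp hq (𝟙 Z))
    have step_pres : ∀ A B : C, (PathStep A B ∨ PathStep B A) → P A → P B := by
      rintro A B (⟨hA, hB, h⟩ | ⟨hB, hA, h⟩) pA
      · rcases h with ⟨f, hf⟩ | he
        · rcases indec_PorQ B hB with pb | qb
          · exact pb
          · exact absurd (hPQ _ _ pA qb f) hf
        · exact he.elim fun e => hPiso e.symm (hPs A 1 pA)
      · rcases h with ⟨f, hf⟩ | he
        · rcases indec_PorQ B hB with pb | qb
          · exact pb
          · exact absurd (hQP _ _ qb pA f) hf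
        · exact he.elim fun e => hPiso (shiftShiftNeg B 1) (hPs _ (-1) (hPiso e pA))
    have walk_pres : ∀ A B : C, HasWalk A B → P A → P B := by
      intro A B h pA
      induction h with
      | refl => exact pA
      | tail _ hstep ih => exact step_pres _ _ hstep ih
    -- find an indecomposable in P
    have exP : ∃ G₀ : C, IsIndec G₀ ∧ P G₀ := by
      obtain ⟨n, G, hind, ⟨e⟩⟩ := hdec X₀
      have hn : n ≠ 0 := by
        rintro rfl
        refine hX₀ (IsZero.of_iso ?_ e)
        rw [IsZero.iff_id_eq_zero]
        apply biproduct.hom_ext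
        intro j
        exact j.elim0
      set i : Fin n := ⟨0, Nat.pos_of_ne_zero hn⟩ with hi
      refine ⟨G i, hind i, ?_⟩
      rcases indec_PorQ (G i) (hind i) with h | h
      · exact h
      · exfalso
        have hm : (biproduct.ι G i ≫ e.inv) ≠ 0 := by
          intro h0
          have hι : biproduct.ι G i = 0 := by
            have := congrArg (fun g => g ≫ e.hom) h0
            simpa using this
          refine (hind i).1 ?_
          rw [IsZero.iff_id_eq_zero, ← biproduct.ι_π_self G i, hι, zero_comp]
        exact hm (hQP _ _ h hPX₀ _)
    have exQ : ∃ H₀ : C, IsIndec H₀ ∧ Q H₀ := by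
      obtain ⟨n, G, hind, ⟨e⟩⟩ := hdec Y₀
      have hn : n ≠ 0 := by
        rintro rfl
        refine hY₀ (IsZero.of_iso ?_ e)
        rw [IsZero.iff_id_eq_zero]
        apply biproduct.hom_ext
        intro j
        exact j.elim0
      set i : Fin n := ⟨0, Nat.pos_of_ne_zero hn⟩ with hi
      refine ⟨G i, hind i, ?_⟩
      rcases indec_PorQ (G i) (hind i) with h | h
      · exfalso
        have hm : (biproduct.ι G i ≫ e.inv) ≠ 0 := by
          intro h0
          have hι : biproduct.ι G i = 0 := by
            have := congrArg (fun g => g ≫ e.hom) h0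
            simpa using this
          refine (hind i).1 ?_
          rw [IsZero.iff_id_eq_zero, ← biproduct.ι_π_self G i, hι, zero_comp]
        exact hm (hPQ _ _ h hQY₀ _)
      · exact h
    obtain ⟨G₀, hG₀, hPG₀⟩ := exP
    obtain ⟨H₀, hH₀, hQH₀⟩ := exQ
    exact not_both H₀ hH₀ ⟨walk_pres G₀ H₀ (hconn G₀ H₀ hG₀ hH₀) hPG₀, hQH₀⟩
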